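/- For every n ≥ 3 and every k > 0, there exist probability distributions P and Q on [n] with Q(i) > 0 for all i, such that P and Q satisfy the classical k-substate property (hence D(P|Q) ≤ 2k + 2) while S(P|Q) > k(n - 2) - 1. Consequently S(P|Q) > (D(P|Q)/2 - 1)(n - 2) - 1. -/

import Mathlib

open Finset

/-- The classical `k`-substate property for distributions on `Fin n`:
for every `r > 1` there is a distribution `P_r` with `‖P - P_r‖₁ ≤ 2/r` and
`(1 - 1/r) * P_r i / 2^(r*k) ≤ Q i` for all `i`. -/
def SubstateProperty (n : ℕ) (P Q : Fin n → ℝ) (k : ℝ) : Prop :=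
  ∀ r : ℝ, 1 < r → ∃ Pr : Fin n → ℝ,
    (∀ i, 0 ≤ Pr i) ∧ (∑ i, Pr i = 1) ∧
    (∑ i, |P i - Pr i|) ≤ 2 / r ∧
    ∀ i, (1 - 1 / r) * Pr i / (2 : ℝ) ^ (r * k) ≤ Q i

/-- The divergence `D(P|Q)`: sup over events `S` of
`Pr_P[S] * log₂ (Pr_P[S] / Pr_Q[S])`. -/
noncomputable def Dv (n : ℕ) (P Q : Fin n → ℝ) : ℝ :=
  ⨆ S : Finset (Fin n),
    (∑ i ∈ S, P i) * Real.logb 2 ((∑ i ∈ S, P i) / (∑ i ∈ S, Q i))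

/-- For every `n ≥ 3` and `k > 0` there are distributions `P`, `Q` on `Fin n`
with `Q` positive satisfying the classical `k`-substate property (hence
`D(P|Q) ≤ 2k + 2`) while `S(P|Q) > k(n-2) - 1`; consequently
`S(P|Q) > (D(P|Q)/2 - 1)(n-2) - 1`. -/
noncomputable def Pd (n : ℕ) : Fin n → ℝ := fun i =>
  ((n:ℝ) - 1) * ((n:ℝ)⁻¹) ^ (i.val + 1) + (if i.val = 0 then ((n:ℝ)⁻¹) ^ n else 0)

noncomputable def wd (n : ℕ) (k : ℝ) (i : Fin n) : ℝ := (2:ℝ) ^ (-(k * (n:ℝ) ^ i.val))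

noncomputable def Td (n : ℕ) (k : ℝ) : ℝ :=
  ∑ i : Fin n, (if i.val = 0 then 0 else Pd n i * wd n k i)

noncomputable def Qd (n : ℕ) (k : ℝ) : Fin n → ℝ := fun i =>
  if i.val = 0 then 1 - Td n k else Pd n i * wd n k i

lemma sum_if_zero (n : ℕ) (hn : 0 < n) (f : Fin n → ℝ) :
    ∑ i : Fin n, (if i.val = 0 then f i else 0) = f ⟨0, hn⟩ := by
  rw [Finset.sum_eq_single ⟨0, hn⟩]
  · simp
  · intro b _ hb
    have : b.val ≠ 0 := by
      intro h; exact hb (Fin.ext h)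
    simp [this]
  · simp

lemma wd_pos (n : ℕ) (k : ℝ) (i : Fin n) : 0 < wd n k i := Real.rpow_pos_of_pos (by norm_num) _

lemma Pd_pos (n : ℕ) (hn : 3 ≤ n) (i : Fin n) : 0 < Pd n i := by
  have h1 : (1:ℝ) < (n:ℝ) := by exact_mod_cast lt_of_lt_of_le (by norm_num) hn
  have hA : (0:ℝ) < (n:ℝ) - 1 := by linarith
  have hx : (0:ℝ) < ((n:ℝ)⁻¹) := by positivity
  have h2 : 0 < ((n:ℝ) - 1) * ((n:ℝ)⁻¹) ^ (i.val + 1) := by positivity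
  unfold Pd
  split
  · positivity
  · simpa using h2

lemma tail_sum (n : ℕ) (hn : 3 ≤ n) (j : ℕ) (hj : j ≤ n) :
    ∑ m ∈ Finset.Ico j n, ((n:ℝ) - 1) * ((n:ℝ)⁻¹) ^ (m + 1)
      = ((n:ℝ)⁻¹) ^ j - ((n:ℝ)⁻¹) ^ n := by
  have h1 : (1:ℝ) < (n:ℝ) := by exact_mod_cast lt_of_lt_of_le (by norm_num) hn
  have hn0 : (n:ℝ) ≠ 0 := by positivity
  have hx1 : ((n:ℝ)⁻¹) ≠ 1 := by
    intro h
    rw [inv_eq_one] at h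
    simp [h] at h1
  have hc : ((n:ℝ) - 1) * (n:ℝ)⁻¹ ≠ 0 := by
    apply mul_ne_zero
    · intro h; rw [sub_eq_zero] at h; exact hx1 (by rw [h]; simp)
    · exact inv_ne_zero hn0
  have hgeo := geom_sum_Ico (x := ((n:ℝ)⁻¹)) hx1 hj
  have hx : (n:ℝ)⁻¹ - 1 = -(((n:ℝ) - 1) * (n:ℝ)⁻¹) := by field_simp; ring
  calc ∑ m ∈ Finset.Ico j n, ((n:ℝ) - 1) * ((n:ℝ)⁻¹) ^ (m + 1)
      = (((n:ℝ) - 1) * (n:ℝ)⁻¹) * ∑ m ∈ Finset.Ico j n, ((n:ℝ)⁻¹) ^ m := by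
        rw [Finset.mul_sum]; apply Finset.sum_congr rfl; intro m _; ring
    _ = (((n:ℝ) - 1) * (n:ℝ)⁻¹) * ((((n:ℝ)⁻¹) ^ n - ((n:ℝ)⁻¹) ^ j) / ((n:ℝ)⁻¹ - 1)) := by
        rw [hgeo]
    _ = -((((n:ℝ) - 1) * (n:ℝ)⁻¹) * ((((n:ℝ)⁻¹) ^ n - ((n:ℝ)⁻¹) ^ j) / (((n:ℝ) - 1) * (n:ℝ)⁻¹))) := by
        rw [hx, div_neg, mul_neg]
    _ = -(((n:ℝ)⁻¹) ^ n - ((n:ℝ)⁻¹) ^ j) := by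
        rw [← mul_div_assoc, mul_div_cancel_left₀ _ hc]
    _ = ((n:ℝ)⁻¹) ^ j - ((n:ℝ)⁻¹) ^ n := by ring

lemma Pd_sum (n : ℕ) (hn : 3 ≤ n) : ∑ i : Fin n, Pd n i = 1 := by
  have hn0 : 0 < n := by omega
  have h1 : (1:ℝ) < (n:ℝ) := by exact_mod_cast lt_of_lt_of_le (by norm_num) hn
  unfold Pd
  rw [Finset.sum_add_distrib, sum_if_zero n hn0]
  have : ∑ i : Fin n, ((n:ℝ) - 1) * ((n:ℝ)⁻¹) ^ (i.val + 1)
      = ∑ m ∈ Finset.Ico 0 n, ((n:ℝ) - 1) * ((n:ℝ)⁻¹) ^ (m + 1) := by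
    rw [← Finset.range_eq_Ico, Fin.sum_univ_eq_sum_range (fun m => ((n:ℝ) - 1) * ((n:ℝ)⁻¹) ^ (m + 1))]
  rw [this, tail_sum n hn 0 (by omega)]
  simp

lemma Pd_ne (n : ℕ) (i : Fin n) (h : i.val ≠ 0) :
    Pd n i = ((n:ℝ) - 1) * ((n:ℝ)⁻¹) ^ (i.val + 1) := by simp [Pd, h]

lemma subset_tail (n : ℕ) (hn : 3 ≤ n) (j : ℕ) (hj1 : 1 ≤ j) (S : Finset (Fin n))
    (hS : ∀ i ∈ S, j ≤ i.val) : ∑ i ∈ S, Pd n i ≤ ((n:ℝ)⁻¹) ^ j := by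
  have h1 : (1:ℝ) < (n:ℝ) := by exact_mod_cast lt_of_lt_of_le (by norm_num) hn
  have hA : (0:ℝ) < (n:ℝ) - 1 := by linarith
  have hx : (0:ℝ) < ((n:ℝ)⁻¹) := by positivity
  rcases S.eq_empty_or_nonempty with h | ⟨i0, hi0⟩
  · rw [h, Finset.sum_empty]; positivity
  have hjn : j ≤ n := le_trans (le_trans (hS i0 hi0) (le_of_lt i0.isLt)) (le_refl n)
  have step1 : ∑ i ∈ S, Pd n i = ∑ i ∈ S, ((n:ℝ) - 1) * ((n:ℝ)⁻¹) ^ (i.val + 1) := by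
    apply Finset.sum_congr rfl
    intro i hi
    exact Pd_ne n i (by have := hS i hi; omega)
  have step2 : ∑ i ∈ S, ((n:ℝ) - 1) * ((n:ℝ)⁻¹) ^ (i.val + 1)
      = ∑ m ∈ S.image Fin.val, ((n:ℝ) - 1) * ((n:ℝ)⁻¹) ^ (m + 1) := by
    rw [Finset.sum_image]
    intro x _ y _ h
    exact Fin.ext h
  have step3 : ∑ m ∈ S.image Fin.val, ((n:ℝ) - 1) * ((n:ℝ)⁻¹) ^ (m + 1)
      ≤ ∑ m ∈ Finset.Ico j n, ((n:ℝ) - 1) * ((n:ℝ)⁻¹) ^ (m + 1) := by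
    apply Finset.sum_le_sum_of_subset_of_nonneg
    · intro m hm
      rw [Finset.mem_image] at hm
      obtain ⟨i, hi, rfl⟩ := hm
      rw [Finset.mem_Ico]
      exact ⟨hS i hi, i.isLt⟩
    · intro m _ _
      positivity
  rw [step1, step2]
  refine le_trans step3 ?_
  rw [tail_sum n hn j hjn]
  have : (0:ℝ) ≤ ((n:ℝ)⁻¹) ^ n := by positivity
  linarith

lemma Pd_zero (n : ℕ) (hn : 3 ≤ n) :
    Pd n ⟨0, by omega⟩ = 1 - (n:ℝ)⁻¹ + ((n:ℝ)⁻¹) ^ n := by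
  have h1 : (1:ℝ) < (n:ℝ) := by exact_mod_cast lt_of_lt_of_le (by norm_num) hn
  have hn0 : (n:ℝ) ≠ 0 := by positivity
  simp [Pd]
  field_simp

lemma sum_Pd_nonzero (n : ℕ) (hn : 3 ≤ n) :
    ∑ i : Fin n, (if i.val = 0 then 0 else Pd n i) = (n:ℝ)⁻¹ - ((n:ℝ)⁻¹) ^ n := by
  have hn0 : 0 < n := by omega
  have key : ∀ i : Fin n, (if i.val = 0 then 0 else Pd n i)
      = Pd n i - (if i.val = 0 then Pd n i else 0) := by
    intro i; split <;> ring
  rw [Finset.sum_congr rfl (fun i _ => key i), Finset.sum_sub_distrib,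
    sum_if_zero n hn0 (Pd n), Pd_sum n hn, Pd_zero n hn]
  ring

lemma Td_pos (n : ℕ) (hn : 3 ≤ n) (k : ℝ) : 0 < Td n k := by
  unfold Td
  apply Finset.sum_pos'
  · intro i _
    split
    · exact le_refl 0
    · exact le_of_lt (mul_pos (Pd_pos n hn i) (wd_pos n k i))
  · refine ⟨⟨1, by omega⟩, Finset.mem_univ _, ?_⟩
    rw [if_neg (by simp)]
    exact mul_pos (Pd_pos n hn _) (wd_pos n k _)

lemma Td_lt (n : ℕ) (hn : 3 ≤ n) (k : ℝ) (hk : 0 < k) :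
    Td n k < (n:ℝ)⁻¹ - ((n:ℝ)⁻¹) ^ n := by
  have h1 : (1:ℝ) < (n:ℝ) := by exact_mod_cast lt_of_lt_of_le (by norm_num) hn
  have hw : (2:ℝ) ^ (-(k * (n:ℝ))) < 1 := by
    apply Real.rpow_lt_one_of_one_lt_of_neg (by norm_num)
    nlinarith
  have step : Td n k ≤ (2:ℝ) ^ (-(k * (n:ℝ))) * ((n:ℝ)⁻¹ - ((n:ℝ)⁻¹) ^ n) := by
    unfold Td
    rw [← sum_Pd_nonzero n hn, Finset.mul_sum]
    apply Finset.sum_le_sum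
    intro i _
    split
    · simp
    · rename_i h
      rw [mul_comm ((2:ℝ) ^ (-(k * (n:ℝ)))) (Pd n i)]
      apply mul_le_mul_of_nonneg_left _ (le_of_lt (Pd_pos n hn i))
      unfold wd
      apply Real.rpow_le_rpow_of_exponent_le (by norm_num)
      have hpow : (n:ℝ) ≤ (n:ℝ) ^ i.val := by
        calc (n:ℝ) = (n:ℝ) ^ 1 := (pow_one _).symm
        _ ≤ (n:ℝ) ^ i.val := pow_le_pow_right₀ (by linarith) (by omega)
      nlinarith
  have hpos : 0 < (n:ℝ)⁻¹ - ((n:ℝ)⁻¹) ^ n := by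
    have : ((n:ℝ)⁻¹) ^ n < ((n:ℝ)⁻¹) ^ 1 := by
      apply pow_lt_pow_right_of_lt_one₀ (by positivity) (by
        rw [inv_lt_one_iff₀]; right; exact h1) (by omega)
    simpa using this
  nlinarith

lemma Td_third (n : ℕ) (hn : 3 ≤ n) (k : ℝ) (hk : 0 < k) : Td n k < 1/3 := by
  have h3 : (3:ℝ) ≤ (n:ℝ) := by exact_mod_cast hn
  have hxn : (0:ℝ) < ((n:ℝ)⁻¹) ^ n := by positivity
  have hinv : (n:ℝ)⁻¹ ≤ 1/3 := by
    rw [inv_le_comm₀ (by linarith) (by norm_num)]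
    linarith [inv_anti₀ (by norm_num : (0:ℝ) < 3) h3]
  have := Td_lt n hn k hk
  linarith

lemma Qd_zero (n : ℕ) (hn : 3 ≤ n) (k : ℝ) : Qd n k ⟨0, by omega⟩ = 1 - Td n k := by
  simp [Qd]

lemma Qd_zero_ge (n : ℕ) (hn : 3 ≤ n) (k : ℝ) (hk : 0 < k) :
    Pd n ⟨0, by omega⟩ ≤ Qd n k ⟨0, by omega⟩ := by
  rw [Qd_zero n hn k, Pd_zero n hn]
  have := Td_lt n hn k hk
  linarith

lemma Qd_zero_two_thirds (n : ℕ) (hn : 3 ≤ n) (k : ℝ) (hk : 0 < k) :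
    2/3 ≤ Qd n k ⟨0, by omega⟩ := by
  rw [Qd_zero n hn k]
  have := Td_third n hn k hk
  linarith

lemma Qd_zero_lt_one (n : ℕ) (hn : 3 ≤ n) (k : ℝ) : Qd n k ⟨0, by omega⟩ < 1 := by
  rw [Qd_zero n hn k]
  have := Td_pos n hn k
  linarith

lemma Qd_pos (n : ℕ) (hn : 3 ≤ n) (k : ℝ) (hk : 0 < k) (i : Fin n) : 0 < Qd n k i := by
  unfold Qd
  split
  · rename_i h
    have h0 : i = ⟨0, by omega⟩ := Fin.ext h
    have := Qd_zero_two_thirds n hn k hk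
    rw [Qd_zero n hn k] at this
    linarith
  · exact mul_pos (Pd_pos n hn i) (wd_pos n k i)

lemma Qd_sum (n : ℕ) (hn : 3 ≤ n) (k : ℝ) : ∑ i : Fin n, Qd n k i = 1 := by
  have hn0 : 0 < n := by omega
  have key : ∀ i : Fin n, Qd n k i
      = (if i.val = 0 then 1 - Td n k else 0) + (if i.val = 0 then 0 else Pd n i * wd n k i) := by
    intro i; unfold Qd; split <;> ring
  rw [Finset.sum_congr rfl (fun i _ => key i), Finset.sum_add_distrib,
    sum_if_zero n hn0 (fun _ => 1 - Td n k)]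
  show 1 - Td n k + Td n k = 1
  ring

lemma Qd_ne (n : ℕ) (k : ℝ) (i : Fin n) (h : i.val ≠ 0) : Qd n k i = Pd n i * wd n k i := by
  simp [Qd, h]

lemma logb_Pd_Qd (n : ℕ) (hn : 3 ≤ n) (k : ℝ) (i : Fin n) (h : i.val ≠ 0) :
    Real.logb 2 (Pd n i / Qd n k i) = k * (n:ℝ) ^ i.val := by
  rw [Qd_ne n k i h]
  have hP : Pd n i ≠ 0 := ne_of_gt (Pd_pos n hn i)
  rw [div_mul_eq_div_div, div_self hP]
  unfold wd
  rw [one_div, ← Real.rpow_neg (by norm_num), neg_neg,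
    Real.logb_rpow (by norm_num) (by norm_num)]

lemma entropy_eq (n : ℕ) (hn : 3 ≤ n) (k : ℝ) (hk : 0 < k) :
    ∑ i : Fin n, Pd n i * Real.logb 2 (Pd n i / Qd n k i)
      = Pd n ⟨0, by omega⟩ * Real.logb 2 (Pd n ⟨0, by omega⟩ / Qd n k ⟨0, by omega⟩)
        + ((n:ℝ) - 1) * (k * ((n:ℝ) - 1) * (n:ℝ)⁻¹) := by
  have hn0 : 0 < n := by omega
  have h1 : (1:ℝ) < (n:ℝ) := by exact_mod_cast lt_of_lt_of_le (by norm_num) hn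
  set c : ℝ := k * ((n:ℝ) - 1) * (n:ℝ)⁻¹ with hc
  set f : Fin n → ℝ := fun i => Pd n i * Real.logb 2 (Pd n i / Qd n k i) with hf
  have hterm : ∀ i : Fin n, i.val ≠ 0 → f i = c := by
    intro i h
    rw [hf]
    simp only []
    rw [logb_Pd_Qd n hn k i h, Pd_ne n i h, hc]
    have : ((n:ℝ)⁻¹) ^ (i.val + 1) * (n:ℝ) ^ i.val = (n:ℝ)⁻¹ := by
      rw [pow_succ']
      have : ((n:ℝ)⁻¹) ^ i.val * (n:ℝ) ^ i.val = 1 := by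
        rw [← mul_pow, inv_mul_cancel₀ (by positivity), one_pow]
      calc (n:ℝ)⁻¹ * ((n:ℝ)⁻¹) ^ i.val * (n:ℝ) ^ i.val
          = (n:ℝ)⁻¹ * (((n:ℝ)⁻¹) ^ i.val * (n:ℝ) ^ i.val) := by ring
        _ = (n:ℝ)⁻¹ := by rw [this, mul_one]
    linear_combination ((n:ℝ) - 1) * k * this
  have key : ∀ i : Fin n, f i = (if i.val = 0 then f i - c else 0) + c := by
    intro i
    split
    · ring
    · rename_i h
      rw [hterm i h]; ring
  rw [Finset.sum_congr rfl (fun i _ => key i), Finset.sum_add_distrib,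
    sum_if_zero n hn0 (fun i => f i - c), Finset.sum_const, Finset.card_univ, Fintype.card_fin]
  rw [nsmul_eq_mul]
  push_cast
  ring


lemma Dv_le (n : ℕ) (hn : 3 ≤ n) (k : ℝ) (hk : 0 < k) :
    Dv n (Pd n) (Qd n k) ≤ 2 * k + 2 := by
  have h1 : (1:ℝ) < (n:ℝ) := by exact_mod_cast lt_of_lt_of_le (by norm_num) hn
  have h3 : (3:ℝ) ≤ (n:ℝ) := by exact_mod_cast hn
  have hxpos : (0:ℝ) < (n:ℝ)⁻¹ := by positivity
  apply ciSup_le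
  intro S
  rcases S.eq_empty_or_nonempty with rfl | hS
  · simp only [Finset.sum_empty, zero_mul]
    linarith
  set p := ∑ i ∈ S, Pd n i with hp
  set q := ∑ i ∈ S, Qd n k i with hq
  have hqpos : 0 < q := Finset.sum_pos (fun i _ => Qd_pos n hn k hk i) hS
  have hppos : 0 < p := Finset.sum_pos (fun i _ => Pd_pos n hn i) hS
  set j := S.min' hS with hj
  have hjS : j ∈ S := S.min'_mem hS
  have hqj : Qd n k j ≤ q :=
    Finset.single_le_sum (fun i _ => le_of_lt (Qd_pos n hn k hk i)) hjS
  by_cases hj0 : j.val = 0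
  · have hp1 : p ≤ 1 := by
      rw [hp, ← Pd_sum n hn]
      exact Finset.sum_le_sum_of_subset_of_nonneg (Finset.subset_univ S)
        (fun i _ _ => le_of_lt (Pd_pos n hn i))
    have hje : j = ⟨0, by omega⟩ := Fin.ext hj0
    have hq23 : 2/3 ≤ q := by
      refine le_trans ?_ hqj
      rw [hje]
      exact Qd_zero_two_thirds n hn k hk
    have hlog : Real.logb 2 (p / q) ≤ 1 := by
      have hpq : p / q ≤ 2 := by
        rw [div_le_iff₀ hqpos]
        nlinarith
      calc Real.logb 2 (p / q) ≤ Real.logb 2 2 :=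
            (Real.logb_le_logb (by norm_num) (by positivity) (by norm_num)).mpr hpq
        _ = 1 := Real.logb_self_eq_one (by norm_num)
    calc p * Real.logb 2 (p / q) ≤ p * 1 :=
          mul_le_mul_of_nonneg_left hlog (le_of_lt hppos)
      _ ≤ 1 := by linarith
      _ ≤ 2 * k + 2 := by linarith
  · set t := ((n:ℝ)⁻¹) ^ j.val with ht
    have htpos : 0 < t := by positivity
    have hpt : p ≤ t := by
      rw [hp, ht]
      apply subset_tail n hn j.val (by omega) S
      intro i hi
      exact S.min'_le i hi
    have hQjpos : 0 < Qd n k j := Qd_pos n hn k hk j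
    set W := (2:ℝ) ^ (k * (n:ℝ) ^ j.val) with hW
    have hWpos : 0 < W := Real.rpow_pos_of_pos (by norm_num) _
    have hratio : t / Qd n k j = ((n:ℝ) / ((n:ℝ) - 1)) * W := by
      rw [Qd_ne n k j hj0, Pd_ne n j hj0]
      unfold wd
      rw [Real.rpow_neg (by norm_num), ← hW, ht, pow_succ]
      have hn0 : (n:ℝ) ≠ 0 := by positivity
      have hn1 : (n:ℝ) - 1 ≠ 0 := by intro h; rw [sub_eq_zero] at h; rw [← h] at h1; linarith
      field_simp
    have hpq : p / q ≤ t / Qd n k j :=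
      div_le_div₀ (le_of_lt htpos) hpt hQjpos hqj
    have hlogW : Real.logb 2 W = k * (n:ℝ) ^ j.val := by
      rw [hW]
      exact Real.logb_rpow (by norm_num) (by norm_num)
    have hlog : Real.logb 2 (p / q) ≤ 1 + k * (n:ℝ) ^ j.val := by
      have hfrac : (0:ℝ) < (n:ℝ) / ((n:ℝ) - 1) := by
        apply div_pos (by linarith) (by linarith)
      calc Real.logb 2 (p / q) ≤ Real.logb 2 (t / Qd n k j) :=
            (Real.logb_le_logb (by norm_num) (by positivity) (by positivity)).mpr hpq
        _ = Real.logb 2 ((n:ℝ) / ((n:ℝ) - 1)) + Real.logb 2 W := by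
            rw [hratio, Real.logb_mul (ne_of_gt hfrac) (ne_of_gt hWpos)]
        _ ≤ 1 + k * (n:ℝ) ^ j.val := by
            rw [hlogW]
            have hle2 : (n:ℝ) / ((n:ℝ) - 1) ≤ 2 := by
              rw [div_le_iff₀ (by linarith)]
              linarith
            have : Real.logb 2 ((n:ℝ) / ((n:ℝ) - 1)) ≤ Real.logb 2 2 :=
              (Real.logb_le_logb (by norm_num) hfrac (by norm_num)).mpr hle2
            rw [Real.logb_self_eq_one (by norm_num)] at this
            linarith
    have hcancel : t * (n:ℝ) ^ j.val = 1 := by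
      rw [ht, ← mul_pow, inv_mul_cancel₀ (by positivity), one_pow]
    have ht1 : t ≤ 1 := by
      rw [ht]
      apply pow_le_one₀ (le_of_lt hxpos)
      rw [inv_le_one_iff₀]; right; linarith
    have hB : (0:ℝ) ≤ 1 + k * (n:ℝ) ^ j.val := by positivity
    calc p * Real.logb 2 (p / q) ≤ p * (1 + k * (n:ℝ) ^ j.val) :=
          mul_le_mul_of_nonneg_left hlog (le_of_lt hppos)
      _ ≤ t * (1 + k * (n:ℝ) ^ j.val) := mul_le_mul_of_nonneg_right hpt hB
      _ = t + k * (t * (n:ℝ) ^ j.val) := by ring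
      _ = t + k := by rw [hcancel, mul_one]
      _ ≤ 2 * k + 2 := by linarith


lemma substate (n : ℕ) (hn : 3 ≤ n) (k : ℝ) (hk : 0 < k) :
    SubstateProperty n (Pd n) (Qd n k) k := by
  have h1 : (1:ℝ) < (n:ℝ) := by exact_mod_cast lt_of_lt_of_le (by norm_num) hn
  intro r hr
  have hrpos : 0 < r := by linarith
  set A : Finset (Fin n) := Finset.univ.filter (fun i => ((n:ℝ)) ^ i.val ≤ r) with hA
  set B : Finset (Fin n) := Finset.univ.filter (fun i => ¬ ((n:ℝ)) ^ i.val ≤ r) with hB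
  set c : ℝ := ∑ i ∈ A, Pd n i with hc
  have hi0A : (⟨0, by omega⟩ : Fin n) ∈ A := by
    rw [hA, Finset.mem_filter]
    refine ⟨Finset.mem_univ _, ?_⟩
    show ((n:ℝ)) ^ (0:ℕ) ≤ r
    rw [pow_zero]
    linarith
  have hcpos : 0 < c := Finset.sum_pos (fun i _ => Pd_pos n hn i) ⟨_, hi0A⟩
  have hc1 : c ≤ 1 := by
    rw [hc, ← Pd_sum n hn]
    exact Finset.sum_le_sum_of_subset_of_nonneg (Finset.subset_univ A)
      (fun i _ _ => le_of_lt (Pd_pos n hn i))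
  have hsplit : c + ∑ i ∈ B, Pd n i = 1 := by
    rw [hc, hA, hB, Finset.sum_filter_add_sum_filter_not, Pd_sum n hn]
  have hcomp : ∑ i ∈ B, Pd n i ≤ 1/r := by
    rcases B.eq_empty_or_nonempty with hBe | hBne
    · rw [hBe, Finset.sum_empty]
      positivity
    · set j := B.min' hBne with hj
      have hjB : j ∈ B := B.min'_mem hBne
      have hjr : r < (n:ℝ) ^ j.val := by
        rw [hB, Finset.mem_filter] at hjB
        push_neg at hjB
        exact hjB.2
      have hj1 : 1 ≤ j.val := by
        by_contra h
        push_neg at h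
        interval_cases hv : j.val
        · rw [pow_zero] at hjr
          linarith
      have htail := subset_tail n hn j.val hj1 B (fun i hi => B.min'_le i hi)
      refine le_trans htail ?_
      rw [inv_pow, one_div]
      exact inv_anti₀ hrpos (le_of_lt hjr)
  have hcge : 1 - 1/r ≤ c := by linarith
  have h2rk : (1:ℝ) ≤ (2:ℝ) ^ (r * k) := by
    have : (2:ℝ) ^ (0:ℝ) ≤ (2:ℝ) ^ (r * k) :=
      Real.rpow_le_rpow_of_exponent_le one_le_two (by positivity)
    rwa [Real.rpow_zero] at this
  have h2rkpos : (0:ℝ) < (2:ℝ) ^ (r * k) := Real.rpow_pos_of_pos (by norm_num) _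
  refine ⟨fun i => if ((n:ℝ)) ^ i.val ≤ r then Pd n i / c else 0, ?_, ?_, ?_, ?_⟩
  · intro i
    dsimp only
    split
    · exact div_nonneg (le_of_lt (Pd_pos n hn i)) (le_of_lt hcpos)
    · exact le_refl 0
  · rw [← Finset.sum_filter, ← hA, ← Finset.sum_div, ← hc, div_self (ne_of_gt hcpos)]
  · have hsum : ∑ i : Fin n, |Pd n i - (if ((n:ℝ)) ^ i.val ≤ r then Pd n i / c else 0)|
        = (∑ i ∈ A, (Pd n i / c - Pd n i)) + ∑ i ∈ B, Pd n i := by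
      rw [← Finset.sum_filter_add_sum_filter_not Finset.univ (fun i => ((n:ℝ)) ^ i.val ≤ r), ← hA, ← hB]
      congr 1
      · apply Finset.sum_congr rfl
        intro i hi
        rw [hA, Finset.mem_filter] at hi
        rw [if_pos hi.2]
        rw [abs_of_nonpos]
        · ring
        · have : Pd n i ≤ Pd n i / c := by
            rw [le_div_iff₀ hcpos]
            nlinarith [Pd_pos n hn i]
          linarith
      · apply Finset.sum_congr rfl
        intro i hi
        rw [hB, Finset.mem_filter] at hi
        rw [if_neg hi.2, sub_zero, abs_of_pos (Pd_pos n hn i)]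
    rw [hsum, Finset.sum_sub_distrib, ← Finset.sum_div, ← hc, div_self (ne_of_gt hcpos)]
    have : (2:ℝ)/r = 2 * (1/r) := by ring
    rw [this]
    linarith
  · intro i
    dsimp only
    split
    · rename_i hcond
      have step1 : (1 - 1/r) * (Pd n i / c) ≤ Pd n i := by
        have h3 : (1 - 1/r) * (Pd n i / c) ≤ c * (Pd n i / c) := by
          exact mul_le_mul_of_nonneg_right hcge
            (div_nonneg (le_of_lt (Pd_pos n hn i)) (le_of_lt hcpos))
        rwa [mul_div_cancel₀ _ (ne_of_gt hcpos)] at h3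
      refine le_trans ((div_le_div_iff_of_pos_right h2rkpos).mpr step1) ?_
      by_cases hiz : i.val = 0
      · have hie : i = ⟨0, by omega⟩ := Fin.ext hiz
        rw [hie]
        refine le_trans ?_ (Qd_zero_ge n hn k hk)
        exact div_le_self (le_of_lt (Pd_pos n hn _)) h2rk
      · rw [Qd_ne n k i hiz]
        unfold wd
        rw [div_eq_mul_inv, ← Real.rpow_neg (by norm_num)]
        apply mul_le_mul_of_nonneg_left _ (le_of_lt (Pd_pos n hn i))
        apply Real.rpow_le_rpow_of_exponent_le one_le_two
        have hcr : (n:ℝ) ^ i.val ≤ r := hcond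
        nlinarith
    · rename_i hcond
      rw [mul_zero, zero_div]
      exact le_of_lt (Qd_pos n hn k hk i)

lemma entropy_gt (n : ℕ) (hn : 3 ≤ n) (k : ℝ) (hk : 0 < k) :
    (∑ i : Fin n, Pd n i * Real.logb 2 (Pd n i / Qd n k i)) > k * ((n : ℝ) - 2) - 1 := by
  have h1 : (1:ℝ) < (n:ℝ) := by exact_mod_cast lt_of_lt_of_le (by norm_num) hn
  have h3 : (3:ℝ) ≤ (n:ℝ) := by exact_mod_cast hn
  have hxpos : (0:ℝ) < (n:ℝ)⁻¹ := by positivity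
  have hx3 : (n:ℝ)⁻¹ ≤ 1/3 := by
    rw [inv_le_comm₀ (by linarith) (by norm_num)]; linarith
  set P0 := Pd n ⟨0, by omega⟩ with hP0
  set Q0 := Qd n k ⟨0, by omega⟩ with hQ0
  have hP0v : P0 = 1 - (n:ℝ)⁻¹ + ((n:ℝ)⁻¹) ^ n := Pd_zero n hn
  have hxn : ((n:ℝ)⁻¹) ^ n ≤ (n:ℝ)⁻¹ := by
    calc ((n:ℝ)⁻¹) ^ n ≤ ((n:ℝ)⁻¹) ^ 1 :=
      pow_le_pow_of_le_one (le_of_lt hxpos) (by rw [inv_le_one_iff₀]; right; linarith) (by omega)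
    _ = (n:ℝ)⁻¹ := pow_one _
  have hP0le : P0 ≤ 1 := by rw [hP0v]; linarith
  have hP0half : 1/2 ≤ P0 := by
    rw [hP0v]
    have : (0:ℝ) ≤ ((n:ℝ)⁻¹) ^ n := by positivity
    linarith
  have hP0pos : 0 < P0 := by linarith
  have hQ0pos : 0 < Q0 := Qd_pos n hn k hk _
  have hQ0le : Q0 ≤ 1 := le_of_lt (Qd_zero_lt_one n hn k)
  -- logb 2 (P0/Q0) ≥ -1
  have hL : -1 ≤ Real.logb 2 (P0 / Q0) := by
    have h2 : P0 ≤ P0 / Q0 := by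
      rw [le_div_iff₀ hQ0pos]
      nlinarith
    have hmono : Real.logb 2 P0 ≤ Real.logb 2 (P0 / Q0) :=
      (Real.logb_le_logb (by norm_num) hP0pos (by positivity)).mpr h2
    have hhalf : Real.logb 2 (1/2 : ℝ) ≤ Real.logb 2 P0 :=
      (Real.logb_le_logb (by norm_num) (by norm_num) hP0pos).mpr hP0half
    have : Real.logb 2 (1/2 : ℝ) = -1 := by
      rw [one_div, Real.logb_inv, Real.logb_self_eq_one] <;> norm_num
    linarith
  have hterm : P0 * Real.logb 2 (P0 / Q0) ≥ -1 := by
    nlinarith [mul_nonneg (le_of_lt hP0pos) (by linarith : (0:ℝ) ≤ Real.logb 2 (P0/Q0) + 1)]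
  rw [entropy_eq n hn k hk]
  have hxinv : (n:ℝ) * (n:ℝ)⁻¹ = 1 := mul_inv_cancel₀ (by positivity)
  have hmain : ((n:ℝ) - 1) * (k * ((n:ℝ) - 1) * (n:ℝ)⁻¹) = k * ((n:ℝ) - 2) + k * (n:ℝ)⁻¹ := by
    have hne : (n:ℝ) ≠ 0 := by positivity
    field_simp
    ring
  have hkx : 0 < k * (n:ℝ)⁻¹ := by positivity
  rw [hmain]
  rw [← hP0, ← hQ0]
  linarith

theorem stmt5 (n : ℕ) (hn : 3 ≤ n) (k : ℝ) (hk : 0 < k) :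
    ∃ P Q : Fin n → ℝ,
      (∀ i, 0 ≤ P i) ∧ (∑ i, P i = 1) ∧
      (∀ i, 0 < Q i) ∧ (∑ i, Q i = 1) ∧
      SubstateProperty n P Q k ∧
      Dv n P Q ≤ 2 * k + 2 ∧
      (∑ i, P i * Real.logb 2 (P i / Q i)) > k * ((n : ℝ) - 2) - 1 ∧
      (∑ i, P i * Real.logb 2 (P i / Q i)) >
        (Dv n P Q / 2 - 1) * ((n : ℝ) - 2) - 1 := by
  have h3 : (3:ℝ) ≤ (n:ℝ) := by exact_mod_cast hn
  have hDv : Dv n (Pd n) (Qd n k) ≤ 2 * k + 2 := Dv_le n hn k hk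
  have hSub : SubstateProperty n (Pd n) (Qd n k) k := substate n hn k hk
  have hEnt := entropy_gt n hn k hk
  refine ⟨Pd n, Qd n k, fun i => le_of_lt (Pd_pos n hn i), Pd_sum n hn,
    Qd_pos n hn k hk, Qd_sum n hn k, hSub, hDv, hEnt, ?_⟩
  have h2 : (Dv n (Pd n) (Qd n k) / 2 - 1) * ((n:ℝ) - 2) ≤ k * ((n:ℝ) - 2) := by
    apply mul_le_mul_of_nonneg_right _ (by linarith)
    linarith
  linarith
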